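/- In B_5, with α = σ_1σ_2σ_3σ_4 and σ_0 = ασ_4α^{−1}, the identity σ_1σ_0^{−1} = (σ_1^2σ_2σ_1^{−3})(σ_3σ_4^{−1})(σ_1^3σ_3^{−1}σ_2^{−1}σ_1^{−1}) holds, and moreover σ_1^2σ_2σ_1^{−3} = (σ_1σ_4^{−1})^2(σ_2σ_4^{−1})(σ_4σ_1^{−1})^3 and σ_1^3σ_3^{−1}σ_2^{−1}σ_1^{−1} = (σ_1σ_3^{−1})(σ_1σ_4^{−1})^2(σ_4σ_2^{−1})(σ_4σ_1^{−1}). -/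

import Mathlib

/-- Artin braid relators for the braid group on `n` strands, with generators
`FreeGroup.of i` corresponding to `σ_{i+1}` for `i : Fin (n-1)`. -/
def braidRels (n : ℕ) : Set (FreeGroup (Fin (n - 1))) :=
  {r | ∃ i j : Fin (n - 1),
      ((j : ℕ) ≥ (i : ℕ) + 2 ∧
        r = FreeGroup.of i * FreeGroup.of j * (FreeGroup.of i)⁻¹ * (FreeGroup.of j)⁻¹) ∨
      ((j : ℕ) = (i : ℕ) + 1 ∧
        r = FreeGroup.of i * FreeGroup.of j * FreeGroup.of i *
          (FreeGroup.of j * FreeGroup.of i * FreeGroup.of j)⁻¹)}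

/-- The braid group on `n` strands. -/
def BraidGroup (n : ℕ) : Type := PresentedGroup (braidRels n)

instance (n : ℕ) : Group (BraidGroup n) :=
  inferInstanceAs (Group (PresentedGroup (braidRels n)))

/-- The Artin generator `σ_i` of `BraidGroup n`, for `1 ≤ i ≤ n-1` (junk value `1` otherwise). -/
def σ {n : ℕ} (i : ℕ) : BraidGroup n :=
  if h : 1 ≤ i ∧ i < n then PresentedGroup.of (⟨i - 1, by omega⟩ : Fin (n - 1)) else 1

/-- The element `α = σ_1 σ_2 ⋯ σ_{n-1}`. -/
def α (n : ℕ) : BraidGroup n := ((List.range (n - 1)).map (fun i => σ (i + 1))).prod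

/-- The half-twist `σ_j` for an index `j` taken modulo `n`, defined by conjugating
`σ_1` by the rotation `α`: `σ_{1+m} = α^m σ_1 α^{-m}`. -/
def σm {n : ℕ} (j : ℤ) : BraidGroup n := (α n) ^ (j - 1) * σ 1 * (α n) ^ (1 - j)

lemma rel_one {n : ℕ} {r : FreeGroup (Fin (n-1))} (h : r ∈ braidRels n) :
    (PresentedGroup.mk (braidRels n) r : BraidGroup n) = 1 := by
  have : r ∈ Subgroup.normalClosure (braidRels n) := Subgroup.subset_normalClosure h
  exact (QuotientGroup.eq_one_iff r).mpr this

lemma braid_comm {i j : ℕ} (hi : 1 ≤ i) (hj : j ≥ i + 2) (hjn : j < 5) :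
    Commute (σ i : BraidGroup 5) (σ j) := by
  have hij : i < 5 := by omega
  have h : (FreeGroup.of (⟨i-1, by omega⟩ : Fin (5-1)) * FreeGroup.of ⟨j-1, by omega⟩ *
      (FreeGroup.of (⟨i-1, by omega⟩ : Fin (5-1)))⁻¹ * (FreeGroup.of (⟨j-1, by omega⟩ : Fin (5-1)))⁻¹)
      ∈ braidRels 5 := by
    refine ⟨⟨i-1, by omega⟩, ⟨j-1, by omega⟩, Or.inl ⟨?_, rfl⟩⟩
    simp; omega
  have h1 := rel_one h
  simp only [map_mul, map_inv] at h1
  have : σ i = PresentedGroup.of (⟨i-1, by omega⟩ : Fin (5-1)) := by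
    rw [σ]; exact dif_pos ⟨hi, hij⟩
  rw [this]
  have : σ j = PresentedGroup.of (⟨j-1, by omega⟩ : Fin (5-1)) := by
    rw [σ]; exact dif_pos ⟨by omega, hjn⟩
  rw [this]
  unfold PresentedGroup.of
  change (_ : BraidGroup 5) * _ = _ * _
  rw [mul_inv_eq_one, mul_inv_eq_iff_eq_mul] at h1
  exact h1

lemma sw {G : Type*} [Group G] {a c : G} (h : Commute a c) (x : G) :
    c * (a * x) = a * (c * x) := by rw [← mul_assoc, ← h.eq, mul_assoc]

theorem B5_identities :
    ∀ σ₀ : BraidGroup 5, σ₀ = α 5 * σ 4 * (α 5)⁻¹ →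
      (σ 1 * σ₀⁻¹ =
        (σ 1 ^ 2 * σ 2 * (σ 1 ^ 3)⁻¹) * (σ 3 * (σ 4)⁻¹) *
          (σ 1 ^ 3 * (σ 3)⁻¹ * (σ 2)⁻¹ * (σ 1)⁻¹)) ∧
      ((σ 1 : BraidGroup 5) ^ 2 * σ 2 * (σ 1 ^ 3)⁻¹ =
        (σ 1 * (σ 4)⁻¹) ^ 2 * (σ 2 * (σ 4)⁻¹) * (σ 4 * (σ 1)⁻¹) ^ 3) ∧
      ((σ 1 : BraidGroup 5) ^ 3 * (σ 3)⁻¹ * (σ 2)⁻¹ * (σ 1)⁻¹ =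
        (σ 1 * (σ 3)⁻¹) * (σ 1 * (σ 4)⁻¹) ^ 2 * (σ 4 * (σ 2)⁻¹) * (σ 4 * (σ 1)⁻¹)) := by
  intro σ₀ h0
  have hα : α 5 = σ 1 * (σ 2 * (σ 3 * (σ 4 * 1))) := rfl
  have h13 : Commute (σ 1 : BraidGroup 5) (σ 3) := braid_comm (by norm_num) (by norm_num) (by norm_num)
  have h14 : Commute (σ 1 : BraidGroup 5) (σ 4) := braid_comm (by norm_num) (by norm_num) (by norm_num)
  have h24 : Commute (σ 2 : BraidGroup 5) (σ 4) := braid_comm (by norm_num) (by norm_num) (by norm_num)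
  refine ⟨?_, ?_, ?_⟩
  · subst h0
    rw [hα]
    simp only [mul_one, pow_succ, pow_zero, one_mul, mul_inv_rev, inv_inv, mul_assoc,
      sw h13, sw h13.inv_right, sw h13.inv_left, sw h13.inv_left.inv_right,
      sw h14, sw h14.inv_right, sw h14.inv_left, sw h14.inv_left.inv_right,
      sw h24, sw h24.inv_right, sw h24.inv_left, sw h24.inv_left.inv_right,
      h13.symm.eq, h13.inv_right.symm.eq, h13.inv_left.symm.eq, h13.inv_left.inv_right.symm.eq,
      h14.symm.eq, h14.inv_right.symm.eq, h14.inv_left.symm.eq, h14.inv_left.inv_right.symm.eq,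
      h24.symm.eq, h24.inv_right.symm.eq, h24.inv_left.symm.eq, h24.inv_left.inv_right.symm.eq,
      inv_mul_cancel_left, mul_inv_cancel_left, inv_mul_cancel, mul_inv_cancel]
  · simp only [mul_one, pow_succ, pow_zero, one_mul, mul_inv_rev, inv_inv, mul_assoc,
      sw h13, sw h13.inv_right, sw h13.inv_left, sw h13.inv_left.inv_right,
      sw h14, sw h14.inv_right, sw h14.inv_left, sw h14.inv_left.inv_right,
      sw h24, sw h24.inv_right, sw h24.inv_left, sw h24.inv_left.inv_right,
      h13.symm.eq, h13.inv_right.symm.eq, h13.inv_left.symm.eq, h13.inv_left.inv_right.symm.eq,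
      h14.symm.eq, h14.inv_right.symm.eq, h14.inv_left.symm.eq, h14.inv_left.inv_right.symm.eq,
      h24.symm.eq, h24.inv_right.symm.eq, h24.inv_left.symm.eq, h24.inv_left.inv_right.symm.eq,
      inv_mul_cancel_left, mul_inv_cancel_left, inv_mul_cancel, mul_inv_cancel]
  · simp only [mul_one, pow_succ, pow_zero, one_mul, mul_inv_rev, inv_inv, mul_assoc,
      sw h13, sw h13.inv_right, sw h13.inv_left, sw h13.inv_left.inv_right,
      sw h14, sw h14.inv_right, sw h14.inv_left, sw h14.inv_left.inv_right,
      sw h24, sw h24.inv_right, sw h24.inv_left, sw h24.inv_left.inv_right,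
      h13.symm.eq, h13.inv_right.symm.eq, h13.inv_left.symm.eq, h13.inv_left.inv_right.symm.eq,
      h14.symm.eq, h14.inv_right.symm.eq, h14.inv_left.symm.eq, h14.inv_left.inv_right.symm.eq,
      h24.symm.eq, h24.inv_right.symm.eq, h24.inv_left.symm.eq, h24.inv_left.inv_right.symm.eq,
      inv_mul_cancel_left, mul_inv_cancel_left, inv_mul_cancel, mul_inv_cancel]
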